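/- In the formal sl2-setup, the element F^{3i}(x_{3,1}^{2i}) ∈ A_{(0,2i)}, when written as a polynomial in the variables x_{0,2j} and y, has the coefficient of x_{0,2i} equal to a strictly negative rational number. (This is the key nondegeneracy in the proof that the tautological ring of M_{g,1} is generated by κ₁,...,κ_{⌊g/3⌋} and ψ.) -/

import Mathlib

open MvPolynomial Finset

/-- The index set of the tautological variables `x_{i,j}`: pairs `(i,j)` with
`0 ≤ i ≤ j + 2`, `0 ≤ j ≤ 2g-2`, `i + j` even, and `(i,j) ≠ (0,0)`. -/
abbrev Vars (g : ℕ) :=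
  {p : Fin (2 * g + 1) × Fin (2 * g + 1) //
    (p.1 : ℕ) ≤ (p.2 : ℕ) + 2 ∧ (p.2 : ℕ) ≤ 2 * g - 2 ∧
      ((p.1 : ℕ) + (p.2 : ℕ)) % 2 = 0 ∧ ¬((p.1 : ℕ) = 0 ∧ (p.2 : ℕ) = 0)}

/-- Variables of the ring `A`: the `x_{i,j}` together with `y`. -/
abbrev Idx (g : ℕ) := Vars g ⊕ Unit

/-- The bigraded polynomial ring `A = ℚ[{x_{i,j}}, y]` (with `x_{0,0} = g` and `x_{i,j} = 0`
for out-of-range indices, implemented via the total function `xv`). -/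
abbrev A (g : ℕ) := MvPolynomial (Idx g) ℚ

/-- The class `y` (i.e. `ψ`), of bidegree `(0,2)`. -/
noncomputable def Y (g : ℕ) : A g := X (Sum.inr ())

/-- The element `x_{i,j}` of `A`, for arbitrary integers `i, j`: the corresponding variable
when the indices are in range, `g` when `(i,j) = (0,0)`, and `0` otherwise. -/
noncomputable def xv (g : ℕ) (i j : ℤ) : A g :=
  if h : 0 ≤ i ∧ 0 ≤ j ∧ i ≤ j + 2 ∧ j ≤ 2 * (g : ℤ) - 2 ∧ (i + j) % 2 = 0 ∧
      ¬(i = 0 ∧ j = 0) then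
    X (Sum.inl ⟨(⟨i.toNat, by omega⟩, ⟨j.toNat, by omega⟩),
      show i.toNat ≤ j.toNat + 2 by omega,
      show j.toNat ≤ 2 * g - 2 by omega,
      show (i.toNat + j.toNat) % 2 = 0 by omega,
      show ¬(i.toNat = 0 ∧ j.toNat = 0) by omega⟩)
  else if i = 0 ∧ j = 0 then (g : A g) else 0

/-- First index of a variable. -/
def vi {g : ℕ} (v : Vars g) : ℤ := (v.1.1 : ℕ)

/-- Second index of a variable. -/
def vj {g : ℕ} (v : Vars g) : ℤ := (v.1.2 : ℕ)

/-- Binomial coefficient `C(n, k)` for integers, zero when `k < 0`. -/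
noncomputable def binom (n k : ℤ) : ℚ :=
  if 0 ≤ k then (∏ s ∈ Finset.range k.toNat, ((n : ℚ) - s)) / k.toNat.factorial else 0

/-- The operator `E`: multiplication by `x_{2,0}`. -/
noncomputable def Eop (g : ℕ) : Module.End ℚ (A g) := LinearMap.mulLeft ℚ (xv g 2 0)

/-- The differential operator
`F = (1/2) Σ (y x_{i-1,j-1} x_{k-1,l-1} - C(i+k-2, i-1) x_{i+k-2,j+l}) ∂x_{i,j} ∂x_{k,l}
      + Σ x_{i-2,j} ∂x_{i,j}`. -/
noncomputable def Fop (g : ℕ) : Module.End ℚ (A g) :=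
  (1 / 2 : ℚ) • (∑ v : Vars g, ∑ w : Vars g,
      LinearMap.mulLeft ℚ
          (Y g * xv g (vi v - 1) (vj v - 1) * xv g (vi w - 1) (vj w - 1) -
            C (binom (vi v + vi w - 2) (vi v - 1)) * xv g (vi v + vi w - 2) (vj v + vj w)) ∘ₗ
        (pderiv (Sum.inl v)).toLinearMap ∘ₗ (pderiv (Sum.inl w)).toLinearMap) +
    ∑ v : Vars g,
      LinearMap.mulLeft ℚ (xv g (vi v - 2) (vj v)) ∘ₗ (pderiv (Sum.inl v)).toLinearMap

/-- The bigrading: `x_{i,j}` has weight `(i,j)` and `y` has weight `(0,2)`. -/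
def wt (g : ℕ) : Idx g → ℤ × ℤ := Sum.elim (fun v => (vi v, vj v)) (fun _ => (0, 2))



lemma coeff_pderiv {σ : Type*} [DecidableEq σ] (v : σ) (P : MvPolynomial σ ℚ) (m : σ →₀ ℕ) :
    coeff m (pderiv v P) = ((m v + 1 : ℕ) : ℚ) * coeff (m + Finsupp.single v 1) P := by
  induction P using MvPolynomial.induction_on' with
  | add p q hp hq => simp [hp, hq, mul_add]
  | monomial s a =>
    rw [pderiv_monomial, coeff_monomial, coeff_monomial]
    by_cases h : s = m + Finsupp.single v 1
    · subst h
      have he : (m + Finsupp.single v 1) - Finsupp.single v 1 = m := add_tsub_cancel_right _ _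
      have hv : ((m + Finsupp.single v 1 : σ →₀ ℕ)) v = m v + 1 := by simp
      rw [if_pos he, if_pos rfl, hv]
      push_cast; ring
    · rw [if_neg h]
      by_cases h2 : s - Finsupp.single v 1 = m
      · rw [if_pos h2]
        have hsv : s v = 0 := by
          by_contra hsv
          apply h
          ext x
          have := Finsupp.ext_iff.1 h2 x
          simp only [Finsupp.tsub_apply, Finsupp.single_apply] at this
          simp only [Finsupp.add_apply, Finsupp.single_apply]
          by_cases hx : v = x
          · subst hx; simp at this ⊢; omega
          · simp [hx] at this ⊢; omega
        simp [hsv]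
      · rw [if_neg h2, mul_zero]

lemma coeff_X_mul'' {σ : Type*} [DecidableEq σ] (u : σ) (m : σ →₀ ℕ) (Q : MvPolynomial σ ℚ) :
    coeff m (X u * Q) = if m u ≠ 0 then coeff (m - Finsupp.single u 1) Q else 0 := by
  rw [coeff_X_mul']
  simp [Finsupp.mem_support_iff]

variable {g : ℕ}

/-- Construct a variable from in-range indices. -/
def mkv (g : ℕ) (a b : ℕ)
    (h : 1 ≤ g ∧ a ≤ b + 2 ∧ b ≤ 2*g-2 ∧ (a+b) % 2 = 0 ∧ ¬(a = 0 ∧ b = 0)) :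
    Vars g :=
  ⟨(⟨a, by omega⟩, ⟨b, by omega⟩), h.2.1, h.2.2.1, h.2.2.2.1, h.2.2.2.2⟩

@[simp] lemma vi_mkv (a b : ℕ) (h) : vi (mkv g a b h) = (a : ℤ) := rfl
@[simp] lemma vj_mkv (a b : ℕ) (h) : vj (mkv g a b h) = (b : ℤ) := rfl

lemma vi_nonneg (v : Vars g) : 0 ≤ vi v := Int.natCast_nonneg _
lemma vj_nonneg (v : Vars g) : 0 ≤ vj v := Int.natCast_nonneg _
lemma vi_le (v : Vars g) : vi v ≤ vj v + 2 := by
  have h := v.2.1; unfold vi vj; omega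
lemma vj_le (hg : 1 ≤ g) (v : Vars g) : vj v ≤ 2*(g:ℤ) - 2 := by
  have := v.2.2.1
  have h2 : (v.1.2 : ℕ) ≤ 2*g - 2 := this
  unfold vj; omega
lemma v_parity (v : Vars g) : (vi v + vj v) % 2 = 0 := by
  have := v.2.2.2.1; unfold vi vj; omega
lemma v_ne00 (v : Vars g) : ¬(vi v = 0 ∧ vj v = 0) := by
  have := v.2.2.2.2; unfold vi vj; omega

lemma vars_ext (v w : Vars g) (h1 : vi v = vi w) (h2 : vj v = vj w) : v = w := by
  apply Subtype.ext
  unfold vi at h1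
  unfold vj at h2
  apply Prod.ext <;> apply Fin.ext
  · exact_mod_cast h1
  · exact_mod_cast h2

/-- The only variable with `j = 0` is `x_{2,0}`. -/
lemma vj_eq_zero (v : Vars g) (h : vj v = 0) : vi v = 2 := by
  have h1 := vi_le v
  have h2 := v_parity v
  have h3 := v_ne00 v
  have h4 := vi_nonneg v
  omega

/-- The number of `x`-variables in a monomial, with multiplicity. -/
def Nm {g : ℕ} (m : Idx g →₀ ℕ) : ℕ := ∑ v : Vars g, m (Sum.inl v)

lemma Nm_add (m m' : Idx g →₀ ℕ) : Nm (m + m') = Nm m + Nm m' := by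
  unfold Nm
  rw [← Finset.sum_add_distrib]
  simp

lemma Nm_single_inl (v : Vars g) (k : ℕ) : Nm (Finsupp.single (Sum.inl v : Idx g) k) = k := by
  unfold Nm
  rw [Finset.sum_eq_single v]
  · simp
  · intro w _ hw
    rw [Finsupp.single_apply,
      if_neg (show ¬(Sum.inl v : Idx g) = Sum.inl w from fun h => hw (Sum.inl.inj h).symm)]
  · simp

lemma sub_single_add (m : Idx g →₀ ℕ) (u : Idx g) (h : m u ≠ 0) :
    m - Finsupp.single u 1 + Finsupp.single u 1 = m := by
  apply tsub_add_cancel_of_le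
  rw [Finsupp.single_le_iff]
  omega

lemma binom_nonneg (n k : ℤ) (h : k - 1 ≤ n) : 0 ≤ binom n k := by
  unfold binom
  split_ifs with hk
  · apply div_nonneg
    · apply Finset.prod_nonneg
      intro s hs
      rw [Finset.mem_range] at hs
      have : (s : ℤ) < k := by omega
      have : (s : ℚ) ≤ (n : ℚ) := by exact_mod_cast by push_cast; omega
      linarith
    · positivity
  · exact le_refl _

/-- The validity condition for indices of `xv`. -/
def VC (g : ℕ) (i j : ℤ) : Prop :=
  0 ≤ i ∧ 0 ≤ j ∧ i ≤ j + 2 ∧ j ≤ 2 * (g : ℤ) - 2 ∧ (i + j) % 2 = 0 ∧ ¬(i = 0 ∧ j = 0)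

instance (g : ℕ) (i j : ℤ) : Decidable (VC g i j) := by unfold VC; infer_instance

/-- The variable with indices `(i,j)`, given validity. -/
def xvar (g : ℕ) (i j : ℤ) (h : VC g i j) : Vars g :=
  ⟨(⟨i.toNat, by obtain ⟨a,b,c,d,e,f⟩ := h; omega⟩, ⟨j.toNat, by obtain ⟨a,b,c,d,e,f⟩ := h; omega⟩),
    show i.toNat ≤ j.toNat + 2 by obtain ⟨a,b,c,d,e,f⟩ := h; omega,
    show j.toNat ≤ 2 * g - 2 by obtain ⟨a,b,c,d,e,f⟩ := h; omega,
    show (i.toNat + j.toNat) % 2 = 0 by obtain ⟨a,b,c,d,e,f⟩ := h; omega,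
    show ¬(i.toNat = 0 ∧ j.toNat = 0) by obtain ⟨a,b,c,d,e,f⟩ := h; omega⟩

@[simp] lemma vi_xvar (i j : ℤ) (h : VC g i j) : vi (xvar g i j h) = i := by
  have h' := h; obtain ⟨a,b,-⟩ := h'
  unfold vi xvar; simp; omega

@[simp] lemma vj_xvar (i j : ℤ) (h : VC g i j) : vj (xvar g i j h) = j := by
  have h' := h; obtain ⟨a,b,-⟩ := h'
  unfold vj xvar; simp; omega

lemma xv_valid (i j : ℤ) (h : VC g i j) : xv g i j = X (Sum.inl (xvar g i j h)) := by
  unfold xv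
  rw [dif_pos (show 0 ≤ i ∧ 0 ≤ j ∧ i ≤ j + 2 ∧ j ≤ 2 * (g:ℤ) - 2 ∧ (i + j) % 2 = 0 ∧
    ¬(i = 0 ∧ j = 0) from h)]
  rfl

lemma xv_invalid (i j : ℤ) (h : ¬ VC g i j) (h2 : ¬(i = 0 ∧ j = 0)) : xv g i j = 0 := by
  unfold xv
  rw [dif_neg (show ¬(0 ≤ i ∧ 0 ≤ j ∧ i ≤ j + 2 ∧ j ≤ 2 * (g:ℤ) - 2 ∧ (i + j) % 2 = 0 ∧
    ¬(i = 0 ∧ j = 0)) from h), if_neg h2]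

lemma xv_00 : xv g 0 0 = MvPolynomial.C (g : ℚ) := by
  unfold xv
  rw [dif_neg (by simp), if_pos ⟨rfl, rfl⟩, C_eq_coe_nat]

lemma coeff_Y_mul (m' : Idx g →₀ ℕ) (hy : m' (Sum.inr ()) = 0) (Q : A g) :
    coeff m' (Y g * Q) = 0 := by
  unfold Y
  rw [coeff_X_mul'']
  simp [hy]

set_option maxHeartbeats 2000000 in
lemma coeff_Fop (P : A g) (m' : Idx g →₀ ℕ) (hy : m' (Sum.inr ()) = 0) :
    coeff m' (Fop g P) =
      (1/2 : ℚ) * ∑ v : Vars g, ∑ w : Vars g,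
        (- binom (vi v + vi w - 2) (vi v - 1)) *
          coeff m' (xv g (vi v + vi w - 2) (vj v + vj w) *
            pderiv (Sum.inl v) (pderiv (Sum.inl w) P)) +
      ∑ v : Vars g, coeff m' (xv g (vi v - 2) (vj v) * pderiv (Sum.inl v) P) := by
  unfold Fop
  rw [LinearMap.add_apply, LinearMap.smul_apply, coeff_add, coeff_smul, LinearMap.sum_apply,
    coeff_sum, smul_eq_mul]
  congr 1
  · congr 1
    apply Finset.sum_congr rfl
    intro v _
    rw [LinearMap.sum_apply, coeff_sum]
    apply Finset.sum_congr rfl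
    intro w _
    rw [LinearMap.comp_apply, LinearMap.comp_apply, LinearMap.mulLeft_apply,
      Derivation.coeFn_coe, Derivation.coeFn_coe]
    rw [sub_mul, coeff_sub, mul_assoc (Y g), mul_assoc (Y g), coeff_Y_mul m' hy, zero_sub,
      mul_assoc, coeff_C_mul]
    ring
  · rw [LinearMap.sum_apply, coeff_sum]
    apply Finset.sum_congr rfl
    intro v _
    rw [LinearMap.comp_apply, LinearMap.mulLeft_apply, Derivation.coeFn_coe]

lemma coeff_X_pp (u v w : Idx g) (m' : Idx g →₀ ℕ) (P : A g) :
    coeff m' (X u * pderiv v (pderiv w P)) =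
      if m' u ≠ 0 then
        (((m' - Finsupp.single u 1 : Idx g →₀ ℕ) v + 1 : ℕ) : ℚ) *
          ((((m' - Finsupp.single u 1 + Finsupp.single v 1 : Idx g →₀ ℕ) w + 1 : ℕ) : ℚ) *
            coeff (m' - Finsupp.single u 1 + Finsupp.single v 1 + Finsupp.single w 1) P)
      else 0 := by
  rw [coeff_X_mul'']
  split_ifs with h
  · rw [_root_.coeff_pderiv, _root_.coeff_pderiv]
  · rfl

lemma coeff_X_p (u v : Idx g) (m' : Idx g →₀ ℕ) (P : A g) :
    coeff m' (X u * pderiv v P) =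
      if m' u ≠ 0 then
        (((m' - Finsupp.single u 1 : Idx g →₀ ℕ) v + 1 : ℕ) : ℚ) *
          coeff (m' - Finsupp.single u 1 + Finsupp.single v 1) P
      else 0 := by
  rw [coeff_X_mul'']
  split_ifs with h
  · rw [_root_.coeff_pderiv]
  · rfl

lemma Nm_sub (m : Idx g →₀ ℕ) (u : Idx g) (h : m u ≠ 0) :
    Nm (m - Finsupp.single u 1) + Nm (Finsupp.single u 1 : Idx g →₀ ℕ) = Nm m := by
  conv_rhs => rw [← sub_single_add m u h]
  rw [Nm_add]

@[simp] lemma apply_inr_sub_single (m : Idx g →₀ ℕ) (u : Idx g) :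
    (m - Finsupp.single u 1 : Idx g →₀ ℕ) (Sum.inr ()) =
      m (Sum.inr ()) - (Finsupp.single u 1 : Idx g →₀ ℕ) (Sum.inr ()) := by
  simp [Finsupp.tsub_apply]

/-- The sign-and-vanishing invariant. -/
def Good (g : ℕ) (P : A g) : Prop :=
  ∀ m : Idx g →₀ ℕ, m (Sum.inr ()) = 0 →
    (0 ≤ (-1 : ℚ) ^ Nm m * coeff m P) ∧
    ((∃ z : Vars g, vj z = 0 ∧ m (Sum.inl z) ≠ 0) → coeff m P = 0)

lemma merge_ne00 (v w : Vars g) : ¬(vi v + vi w - 2 = 0 ∧ vj v + vj w = 0) := by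
  rintro ⟨h1, h2⟩
  have hv := vj_nonneg v
  have hw := vj_nonneg w
  have hvv : vj v = 0 := by omega
  have hww : vj w = 0 := by omega
  have e1 := vj_eq_zero v hvv
  have e2 := vj_eq_zero w hww
  omega

lemma merge_term_nonneg (P : A g) (hP : Good g P) (m' : Idx g →₀ ℕ)
    (hy : m' (Sum.inr ()) = 0) (v w : Vars g) :
    0 ≤ (-1 : ℚ) ^ Nm m' * ((- binom (vi v + vi w - 2) (vi v - 1)) *
      coeff m' (xv g (vi v + vi w - 2) (vj v + vj w) *
        pderiv (Sum.inl v) (pderiv (Sum.inl w) P))) := by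
  by_cases hval : VC g (vi v + vi w - 2) (vj v + vj w)
  · rw [xv_valid _ _ hval, coeff_X_pp]
    split_ifs with hu
    · have hmy : ((m' - Finsupp.single (Sum.inl (xvar g (vi v + vi w - 2) (vj v + vj w) hval) : Idx g) 1
          + Finsupp.single (Sum.inl v : Idx g) 1 + Finsupp.single (Sum.inl w : Idx g) 1 : Idx g →₀ ℕ))
          (Sum.inr ()) = 0 := by
        simp [Finsupp.add_apply, Finsupp.tsub_apply, Finsupp.single_apply, hy]
      have hsign := (hP _ hmy).1
      have h1 : Nm (m' - Finsupp.single (Sum.inl (xvar g (vi v + vi w - 2) (vj v + vj w) hval) : Idx g) 1) + 1 = Nm m' := by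
        have h := Nm_sub m' (Sum.inl (xvar g (vi v + vi w - 2) (vj v + vj w) hval)) hu
        rwa [Nm_single_inl] at h
      have hNm : Nm ((m' - Finsupp.single (Sum.inl (xvar g (vi v + vi w - 2) (vj v + vj w) hval) : Idx g) 1
          + Finsupp.single (Sum.inl v : Idx g) 1 + Finsupp.single (Sum.inl w : Idx g) 1 : Idx g →₀ ℕ)) = Nm m' + 1 := by
        rw [Nm_add, Nm_add, Nm_single_inl, Nm_single_inl]
        omega
      have hc : 0 ≤ binom (vi v + vi w - 2) (vi v - 1) :=
        binom_nonneg _ _ (by have := vi_nonneg w; omega)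
      set c := binom (vi v + vi w - 2) (vi v - 1)
      set A := ((((m' - Finsupp.single (Sum.inl (xvar g (vi v + vi w - 2) (vj v + vj w) hval) : Idx g) 1 : Idx g →₀ ℕ)) (Sum.inl v) + 1 : ℕ) : ℚ)
      set B := ((((m' - Finsupp.single (Sum.inl (xvar g (vi v + vi w - 2) (vj v + vj w) hval) : Idx g) 1
          + Finsupp.single (Sum.inl v : Idx g) 1 : Idx g →₀ ℕ)) (Sum.inl w) + 1 : ℕ) : ℚ)
      set D := coeff ((m' - Finsupp.single (Sum.inl (xvar g (vi v + vi w - 2) (vj v + vj w) hval) : Idx g) 1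
          + Finsupp.single (Sum.inl v : Idx g) 1 + Finsupp.single (Sum.inl w : Idx g) 1 : Idx g →₀ ℕ)) P
      have key : (-1 : ℚ) ^ Nm m' * (-c * (A * (B * D))) = c * (A * (B * ((-1) ^ (Nm m' + 1) * D))) := by
        rw [pow_succ]; ring
      rw [hNm] at hsign
      rw [key]
      exact mul_nonneg hc (mul_nonneg (by positivity) (mul_nonneg (by positivity)
        (by exact hsign)))
    · simp
  · rw [xv_invalid _ _ hval (merge_ne00 v w), zero_mul, coeff_zero]
    simp

lemma merge_term_zero (P : A g) (hP : Good g P) (m' : Idx g →₀ ℕ)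
    (hy : m' (Sum.inr ()) = 0) (z0 : Vars g) (hz0 : vj z0 = 0) (hz0m : m' (Sum.inl z0) ≠ 0)
    (v w : Vars g) :
    coeff m' (xv g (vi v + vi w - 2) (vj v + vj w) *
      pderiv (Sum.inl v) (pderiv (Sum.inl w) P)) = 0 := by
  by_cases hval : VC g (vi v + vi w - 2) (vj v + vj w)
  · rw [xv_valid _ _ hval, coeff_X_pp]
    split_ifs with hu
    · have hmy : ((m' - Finsupp.single (Sum.inl (xvar g (vi v + vi w - 2) (vj v + vj w) hval) : Idx g) 1
          + Finsupp.single (Sum.inl v : Idx g) 1 + Finsupp.single (Sum.inl w : Idx g) 1 : Idx g →₀ ℕ))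
          (Sum.inr ()) = 0 := by
        simp [Finsupp.add_apply, Finsupp.tsub_apply, Finsupp.single_apply, hy]
      have happ : ((m' - Finsupp.single (Sum.inl (xvar g (vi v + vi w - 2) (vj v + vj w) hval) : Idx g) 1
          + Finsupp.single (Sum.inl v : Idx g) 1 + Finsupp.single (Sum.inl w : Idx g) 1 : Idx g →₀ ℕ))
          (Sum.inl z0) =
          m' (Sum.inl z0) - (Finsupp.single (Sum.inl (xvar g (vi v + vi w - 2) (vj v + vj w) hval) : Idx g) 1 : Idx g →₀ ℕ) (Sum.inl z0)
          + (Finsupp.single (Sum.inl v : Idx g) 1 : Idx g →₀ ℕ) (Sum.inl z0)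
          + (Finsupp.single (Sum.inl w : Idx g) 1 : Idx g →₀ ℕ) (Sum.inl z0) := by
        simp [Finsupp.add_apply, Finsupp.tsub_apply]
      have hbad : ((m' - Finsupp.single (Sum.inl (xvar g (vi v + vi w - 2) (vj v + vj w) hval) : Idx g) 1
          + Finsupp.single (Sum.inl v : Idx g) 1 + Finsupp.single (Sum.inl w : Idx g) 1 : Idx g →₀ ℕ))
          (Sum.inl z0) ≠ 0 := by
        by_cases huz : (Sum.inl (xvar g (vi v + vi w - 2) (vj v + vj w) hval) : Idx g) = Sum.inl z0
        · have hx : xvar g (vi v + vi w - 2) (vj v + vj w) hval = z0 := Sum.inl.inj huz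
          have hvjsum : vj v + vj w = 0 := by
            have := vj_xvar (vi v + vi w - 2) (vj v + vj w) hval
            rw [hx] at this
            omega
          have hvv : vj v = 0 := by have := vj_nonneg v; have := vj_nonneg w; omega
          have hww : vj w = 0 := by have := vj_nonneg v; have := vj_nonneg w; omega
          have hveq : v = z0 := vars_ext v z0 (by rw [vj_eq_zero v hvv, vj_eq_zero z0 hz0]) (by omega)
          have hweq : w = z0 := vars_ext w z0 (by rw [vj_eq_zero w hww, vj_eq_zero z0 hz0]) (by omega)
          rw [happ, huz, hveq, hweq]
          simp only [Finsupp.single_apply, if_pos rfl]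
          omega
        · rw [happ, Finsupp.single_apply, if_neg huz]
          have e1 : (Finsupp.single (Sum.inl v : Idx g) 1 : Idx g →₀ ℕ) (Sum.inl z0) = 0 ∨
              (Finsupp.single (Sum.inl v : Idx g) 1 : Idx g →₀ ℕ) (Sum.inl z0) = 1 := by
            rw [Finsupp.single_apply]; split_ifs <;> simp
          have e2 : (Finsupp.single (Sum.inl w : Idx g) 1 : Idx g →₀ ℕ) (Sum.inl z0) = 0 ∨
              (Finsupp.single (Sum.inl w : Idx g) 1 : Idx g →₀ ℕ) (Sum.inl z0) = 1 := by
            rw [Finsupp.single_apply]; split_ifs <;> simp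
          omega
      rw [(hP _ hmy).2 ⟨z0, hz0, hbad⟩, mul_zero, mul_zero]
    · rfl
  · rw [xv_invalid _ _ hval (merge_ne00 v w), zero_mul, coeff_zero]

lemma deriv_term_nonneg (P : A g) (hP : Good g P) (m' : Idx g →₀ ℕ)
    (hy : m' (Sum.inr ()) = 0) (v : Vars g) :
    0 ≤ (-1 : ℚ) ^ Nm m' * coeff m' (xv g (vi v - 2) (vj v) * pderiv (Sum.inl v) P) := by
  by_cases hval : VC g (vi v - 2) (vj v)
  · rw [xv_valid _ _ hval, coeff_X_p]
    split_ifs with hu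
    · have hmy : ((m' - Finsupp.single (Sum.inl (xvar g (vi v - 2) (vj v) hval) : Idx g) 1
          + Finsupp.single (Sum.inl v : Idx g) 1 : Idx g →₀ ℕ)) (Sum.inr ()) = 0 := by
        simp [Finsupp.add_apply, Finsupp.tsub_apply, Finsupp.single_apply, hy]
      have hsign := (hP _ hmy).1
      have h1 : Nm (m' - Finsupp.single (Sum.inl (xvar g (vi v - 2) (vj v) hval) : Idx g) 1) + 1 = Nm m' := by
        have h := Nm_sub m' (Sum.inl (xvar g (vi v - 2) (vj v) hval)) hu
        rwa [Nm_single_inl] at h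
      have hNm : Nm ((m' - Finsupp.single (Sum.inl (xvar g (vi v - 2) (vj v) hval) : Idx g) 1
          + Finsupp.single (Sum.inl v : Idx g) 1 : Idx g →₀ ℕ)) = Nm m' := by
        rw [Nm_add, Nm_single_inl]
        omega
      rw [hNm] at hsign
      have key : (-1 : ℚ) ^ Nm m' *
          ((((m' - Finsupp.single (Sum.inl (xvar g (vi v - 2) (vj v) hval) : Idx g) 1 : Idx g →₀ ℕ)) (Sum.inl v) + 1 : ℕ) *
            coeff ((m' - Finsupp.single (Sum.inl (xvar g (vi v - 2) (vj v) hval) : Idx g) 1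
              + Finsupp.single (Sum.inl v : Idx g) 1 : Idx g →₀ ℕ)) P) =
          ((((m' - Finsupp.single (Sum.inl (xvar g (vi v - 2) (vj v) hval) : Idx g) 1 : Idx g →₀ ℕ)) (Sum.inl v) + 1 : ℕ) : ℚ) *
            ((-1) ^ Nm m' *
              coeff ((m' - Finsupp.single (Sum.inl (xvar g (vi v - 2) (vj v) hval) : Idx g) 1
                + Finsupp.single (Sum.inl v : Idx g) 1 : Idx g →₀ ℕ)) P) := by
        ring
      rw [key]
      exact mul_nonneg (by positivity) hsign
    · simp
  · by_cases h00 : vi v - 2 = 0 ∧ vj v = 0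
    · have hxv : xv g (vi v - 2) (vj v) = MvPolynomial.C (g : ℚ) := by
        rw [h00.1, h00.2]; exact xv_00
      rw [hxv, coeff_C_mul, _root_.coeff_pderiv]
      have hmy2 : ((m' + Finsupp.single (Sum.inl v : Idx g) 1 : Idx g →₀ ℕ)) (Sum.inr ()) = 0 := by
        simp [Finsupp.add_apply, Finsupp.single_apply, hy]
      rw [(hP _ hmy2).2 ⟨v, h00.2, by simp [Finsupp.add_apply, Finsupp.single_apply]⟩]
      simp
    · rw [xv_invalid _ _ hval h00, zero_mul, coeff_zero, mul_zero]

lemma deriv_term_zero (P : A g) (hP : Good g P) (m' : Idx g →₀ ℕ)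
    (hy : m' (Sum.inr ()) = 0) (z0 : Vars g) (hz0 : vj z0 = 0) (hz0m : m' (Sum.inl z0) ≠ 0)
    (v : Vars g) :
    coeff m' (xv g (vi v - 2) (vj v) * pderiv (Sum.inl v) P) = 0 := by
  by_cases hval : VC g (vi v - 2) (vj v)
  · rw [xv_valid _ _ hval, coeff_X_p]
    split_ifs with hu
    · have hmy : ((m' - Finsupp.single (Sum.inl (xvar g (vi v - 2) (vj v) hval) : Idx g) 1
          + Finsupp.single (Sum.inl v : Idx g) 1 : Idx g →₀ ℕ)) (Sum.inr ()) = 0 := by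
        simp [Finsupp.add_apply, Finsupp.tsub_apply, Finsupp.single_apply, hy]
      have happ : ((m' - Finsupp.single (Sum.inl (xvar g (vi v - 2) (vj v) hval) : Idx g) 1
          + Finsupp.single (Sum.inl v : Idx g) 1 : Idx g →₀ ℕ)) (Sum.inl z0) =
          m' (Sum.inl z0) - (Finsupp.single (Sum.inl (xvar g (vi v - 2) (vj v) hval) : Idx g) 1 : Idx g →₀ ℕ) (Sum.inl z0)
          + (Finsupp.single (Sum.inl v : Idx g) 1 : Idx g →₀ ℕ) (Sum.inl z0) := by
        simp [Finsupp.add_apply, Finsupp.tsub_apply]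
      have hbad : ((m' - Finsupp.single (Sum.inl (xvar g (vi v - 2) (vj v) hval) : Idx g) 1
          + Finsupp.single (Sum.inl v : Idx g) 1 : Idx g →₀ ℕ)) (Sum.inl z0) ≠ 0 := by
        by_cases huz : (Sum.inl (xvar g (vi v - 2) (vj v) hval) : Idx g) = Sum.inl z0
        · exfalso
          have hx : xvar g (vi v - 2) (vj v) hval = z0 := Sum.inl.inj huz
          have hvjv : vj v = 0 := by
            have := vj_xvar (vi v - 2) (vj v) hval
            rw [hx] at this
            omega
          have := vj_eq_zero v hvjv
          exact hval.2.2.2.2.2 ⟨by omega, by omega⟩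
        · rw [happ, Finsupp.single_apply, if_neg huz]
          have e1 : (Finsupp.single (Sum.inl v : Idx g) 1 : Idx g →₀ ℕ) (Sum.inl z0) = 0 ∨
              (Finsupp.single (Sum.inl v : Idx g) 1 : Idx g →₀ ℕ) (Sum.inl z0) = 1 := by
            rw [Finsupp.single_apply]; split_ifs <;> simp
          omega
      rw [(hP _ hmy).2 ⟨z0, hz0, hbad⟩, mul_zero]
    · rfl
  · by_cases h00 : vi v - 2 = 0 ∧ vj v = 0
    · have hxv : xv g (vi v - 2) (vj v) = MvPolynomial.C (g : ℚ) := by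
        rw [h00.1, h00.2]; exact xv_00
      rw [hxv, coeff_C_mul, _root_.coeff_pderiv]
      have hmy2 : ((m' + Finsupp.single (Sum.inl v : Idx g) 1 : Idx g →₀ ℕ)) (Sum.inr ()) = 0 := by
        simp [Finsupp.add_apply, Finsupp.single_apply, hy]
      have hb : ((m' + Finsupp.single (Sum.inl v : Idx g) 1 : Idx g →₀ ℕ)) (Sum.inl z0) ≠ 0 := by
        simp only [Finsupp.add_apply]
        omega
      rw [(hP _ hmy2).2 ⟨z0, hz0, hb⟩, mul_zero, mul_zero]
    · rw [xv_invalid _ _ hval h00, zero_mul, coeff_zero]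

lemma good_F (P : A g) (hP : Good g P) : Good g (Fop g P) := by
  intro m' hy
  constructor
  · rw [coeff_Fop P m' hy, mul_add]
    apply add_nonneg
    · rw [mul_left_comm]
      apply mul_nonneg (by norm_num)
      rw [Finset.mul_sum]
      apply Finset.sum_nonneg
      intro v _
      rw [Finset.mul_sum]
      apply Finset.sum_nonneg
      intro w _
      exact merge_term_nonneg P hP m' hy v w
    · rw [Finset.mul_sum]
      apply Finset.sum_nonneg
      intro v _
      exact deriv_term_nonneg P hP m' hy v
  · rintro ⟨z0, hz0, hz0m⟩
    rw [coeff_Fop P m' hy]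
    have h1 : (∑ v : Vars g, ∑ w : Vars g,
        (- binom (vi v + vi w - 2) (vi v - 1)) *
          coeff m' (xv g (vi v + vi w - 2) (vj v + vj w) *
            pderiv (Sum.inl v) (pderiv (Sum.inl w) P))) = 0 := by
      apply Finset.sum_eq_zero
      intro v _
      apply Finset.sum_eq_zero
      intro w _
      rw [merge_term_zero P hP m' hy z0 hz0 hz0m v w, mul_zero]
    have h2 : (∑ v : Vars g, coeff m' (xv g (vi v - 2) (vj v) * pderiv (Sum.inl v) P)) = 0 := by
      apply Finset.sum_eq_zero
      intro v _
      exact deriv_term_zero P hP m' hy z0 hz0 hz0m v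
    rw [h1, h2, mul_zero, add_zero]

lemma binom_pos (n k : ℤ) (hk : 0 ≤ k) (hn : k ≤ n) : 0 < binom n k := by
  unfold binom
  rw [if_pos hk]
  apply div_pos
  · apply Finset.prod_pos
    intro s hs
    rw [Finset.mem_range] at hs
    have h1 : (s : ℤ) < k := by omega
    have h2 : (s : ℚ) < (n : ℚ) := by exact_mod_cast by omega
    linarith
  · exact_mod_cast Nat.factorial_pos _

lemma double_single_le (f : Vars g → Vars g → ℚ) (h : ∀ v w, 0 ≤ f v w) (v0 w0 : Vars g) :
    f v0 w0 ≤ ∑ v : Vars g, ∑ w : Vars g, f v w := by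
  calc f v0 w0 ≤ ∑ w : Vars g, f v0 w :=
        Finset.single_le_sum (fun w _ => h v0 w) (Finset.mem_univ w0)
    _ ≤ ∑ v : Vars g, ∑ w : Vars g, f v w :=
        Finset.single_le_sum (fun v _ => Finset.sum_nonneg fun w _ => h v w) (Finset.mem_univ v0)

lemma Fop_ge_merge (P : A g) (hP : Good g P) (m' : Idx g →₀ ℕ)
    (hy : m' (Sum.inr ()) = 0) (v0 w0 : Vars g) :
    (1/2 : ℚ) * ((-1) ^ Nm m' * ((- binom (vi v0 + vi w0 - 2) (vi v0 - 1)) *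
        coeff m' (xv g (vi v0 + vi w0 - 2) (vj v0 + vj w0) *
          pderiv (Sum.inl v0) (pderiv (Sum.inl w0) P))))
      ≤ (-1 : ℚ) ^ Nm m' * coeff m' (Fop g P) := by
  rw [coeff_Fop P m' hy]
  set S1 := ∑ v : Vars g, ∑ w : Vars g, (- binom (vi v + vi w - 2) (vi v - 1)) *
      coeff m' (xv g (vi v + vi w - 2) (vj v + vj w) *
        pderiv (Sum.inl v) (pderiv (Sum.inl w) P)) with hS1
  set S2 := ∑ v : Vars g, coeff m' (xv g (vi v - 2) (vj v) * pderiv (Sum.inl v) P) with hS2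
  have hswap : (-1:ℚ) ^ Nm m' * S1 = ∑ v : Vars g, ∑ w : Vars g,
      (-1:ℚ) ^ Nm m' * ((- binom (vi v + vi w - 2) (vi v - 1)) *
        coeff m' (xv g (vi v + vi w - 2) (vj v + vj w) *
          pderiv (Sum.inl v) (pderiv (Sum.inl w) P))) := by
    rw [hS1, Finset.mul_sum]
    exact Finset.sum_congr rfl fun v _ => Finset.mul_sum _ _ _
  have hs1 : (-1:ℚ) ^ Nm m' * ((- binom (vi v0 + vi w0 - 2) (vi v0 - 1)) *
      coeff m' (xv g (vi v0 + vi w0 - 2) (vj v0 + vj w0) *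
        pderiv (Sum.inl v0) (pderiv (Sum.inl w0) P))) ≤ (-1:ℚ) ^ Nm m' * S1 := by
    rw [hswap]
    exact double_single_le _ (fun v w => merge_term_nonneg P hP m' hy v w) v0 w0
  have hs2 : 0 ≤ (-1:ℚ) ^ Nm m' * S2 := by
    rw [hS2, Finset.mul_sum]
    exact Finset.sum_nonneg fun v _ => deriv_term_nonneg P hP m' hy v
  have final : (-1:ℚ) ^ Nm m' * ((1/2 : ℚ) * S1 + S2) =
      (1/2 : ℚ) * ((-1:ℚ) ^ Nm m' * S1) + (-1:ℚ) ^ Nm m' * S2 := by ring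
  rw [final]
  linarith

lemma Fop_ge_deriv (P : A g) (hP : Good g P) (m' : Idx g →₀ ℕ)
    (hy : m' (Sum.inr ()) = 0) (v0 : Vars g) :
    (-1 : ℚ) ^ Nm m' * coeff m' (xv g (vi v0 - 2) (vj v0) * pderiv (Sum.inl v0) P)
      ≤ (-1 : ℚ) ^ Nm m' * coeff m' (Fop g P) := by
  rw [coeff_Fop P m' hy]
  set S1 := ∑ v : Vars g, ∑ w : Vars g, (- binom (vi v + vi w - 2) (vi v - 1)) *
      coeff m' (xv g (vi v + vi w - 2) (vj v + vj w) *
        pderiv (Sum.inl v) (pderiv (Sum.inl w) P)) with hS1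
  set S2 := ∑ v : Vars g, coeff m' (xv g (vi v - 2) (vj v) * pderiv (Sum.inl v) P) with hS2
  have hs1 : (-1:ℚ) ^ Nm m' * coeff m' (xv g (vi v0 - 2) (vj v0) * pderiv (Sum.inl v0) P)
      ≤ (-1:ℚ) ^ Nm m' * S2 := by
    rw [hS2, Finset.mul_sum]
    exact Finset.single_le_sum (fun v (_ : v ∈ Finset.univ) => deriv_term_nonneg P hP m' hy v)
      (Finset.mem_univ v0)
  have hs2 : 0 ≤ (-1:ℚ) ^ Nm m' * S1 := by
    rw [hS1, Finset.mul_sum]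
    apply Finset.sum_nonneg
    intro v _
    rw [Finset.mul_sum]
    exact Finset.sum_nonneg fun w _ => merge_term_nonneg P hP m' hy v w
  have final : (-1:ℚ) ^ Nm m' * ((1/2 : ℚ) * S1 + S2) =
      (1/2 : ℚ) * ((-1:ℚ) ^ Nm m' * S1) + (-1:ℚ) ^ Nm m' * S2 := by ring
  rw [final]
  linarith

lemma step_merge (P : A g) (hP : Good g P) (m : Idx g →₀ ℕ) (hmy : m (Sum.inr ()) = 0)
    (v0 w0 : Vars g) (hval : VC g (vi v0 + vi w0 - 2) (vj v0 + vj w0))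
    (hw0 : m (Sum.inl w0) ≠ 0)
    (hv0 : (m - Finsupp.single (Sum.inl w0 : Idx g) 1 : Idx g →₀ ℕ) (Sum.inl v0) ≠ 0)
    (hbin : 0 < binom (vi v0 + vi w0 - 2) (vi v0 - 1))
    (hpos : 0 < (-1:ℚ) ^ Nm m * coeff m P)
    (m' : Idx g →₀ ℕ)
    (hm' : m' = m - Finsupp.single (Sum.inl w0 : Idx g) 1 - Finsupp.single (Sum.inl v0 : Idx g) 1
      + Finsupp.single (Sum.inl (xvar g (vi v0 + vi w0 - 2) (vj v0 + vj w0) hval) : Idx g) 1) :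
    0 < (-1:ℚ) ^ Nm m' * coeff m' (Fop g P) := by
  set u0 : Idx g := Sum.inl (xvar g (vi v0 + vi w0 - 2) (vj v0 + vj w0) hval) with hu0
  set μ : Idx g →₀ ℕ :=
    m - Finsupp.single (Sum.inl w0 : Idx g) 1 - Finsupp.single (Sum.inl v0 : Idx g) 1 with hμ
  have hy' : m' (Sum.inr ()) = 0 := by
    rw [hm', hμ]
    simp [Finsupp.add_apply, Finsupp.tsub_apply, Finsupp.single_apply, hmy, hu0]
  have hrec2 : μ + Finsupp.single (Sum.inl v0 : Idx g) 1
      = m - Finsupp.single (Sum.inl w0 : Idx g) 1 :=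
    sub_single_add _ _ hv0
  have hrec3 : μ + Finsupp.single (Sum.inl v0 : Idx g) 1 + Finsupp.single (Sum.inl w0 : Idx g) 1
      = m := by
    rw [hrec2]; exact sub_single_add _ _ hw0
  have hm'sub : m' - Finsupp.single u0 1 = μ := by
    rw [hm']; exact add_tsub_cancel_right _ _
  have hm'u0 : m' u0 ≠ 0 := by
    rw [hm']
    simp [Finsupp.add_apply, Finsupp.single_apply]
  have n1 : Nm (m - Finsupp.single (Sum.inl w0 : Idx g) 1) + 1 = Nm m := by
    have h := Nm_sub m (Sum.inl w0) hw0; rwa [Nm_single_inl] at h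
  have n2 : Nm μ + 1 = Nm (m - Finsupp.single (Sum.inl w0 : Idx g) 1) := by
    have h := Nm_sub (m - Finsupp.single (Sum.inl w0 : Idx g) 1) (Sum.inl v0) hv0
    rw [Nm_single_inl] at h
    rw [hμ]; exact h
  have n3 : Nm m' = Nm μ + 1 := by
    rw [hm', Nm_add]
    rw [hu0, Nm_single_inl]
  have hNm : Nm m = Nm m' + 1 := by omega
  refine lt_of_lt_of_le ?_ (Fop_ge_merge P hP m' hy' v0 w0)
  rw [xv_valid _ _ hval, ← hu0, coeff_X_pp, if_pos hm'u0, hm'sub, hrec3]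
  have hA : (0:ℚ) < ((μ (Sum.inl v0) + 1 : ℕ) : ℚ) := by positivity
  have hB : (0:ℚ) <
      (((μ + Finsupp.single (Sum.inl v0 : Idx g) 1 : Idx g →₀ ℕ) (Sum.inl w0) + 1 : ℕ) : ℚ) := by
    positivity
  have hs : (-1:ℚ) ^ Nm m' * (- binom (vi v0 + vi w0 - 2) (vi v0 - 1) *
      (((μ (Sum.inl v0) + 1 : ℕ) : ℚ) *
        ((((μ + Finsupp.single (Sum.inl v0 : Idx g) 1 : Idx g →₀ ℕ) (Sum.inl w0) + 1 : ℕ) : ℚ) *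
          coeff m P))) =
      binom (vi v0 + vi w0 - 2) (vi v0 - 1) * (((μ (Sum.inl v0) + 1 : ℕ) : ℚ) *
        ((((μ + Finsupp.single (Sum.inl v0 : Idx g) 1 : Idx g →₀ ℕ) (Sum.inl w0) + 1 : ℕ) : ℚ) *
          ((-1:ℚ) ^ Nm m * coeff m P))) := by
    rw [hNm, pow_succ]; ring
  rw [hs]
  have := mul_pos hbin (mul_pos hA (mul_pos hB hpos))
  linarith

lemma step_deriv (P : A g) (hP : Good g P) (m : Idx g →₀ ℕ) (hmy : m (Sum.inr ()) = 0)
    (v0 : Vars g) (hval : VC g (vi v0 - 2) (vj v0))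
    (hv0 : m (Sum.inl v0) ≠ 0)
    (hpos : 0 < (-1:ℚ) ^ Nm m * coeff m P)
    (m' : Idx g →₀ ℕ)
    (hm' : m' = m - Finsupp.single (Sum.inl v0 : Idx g) 1
      + Finsupp.single (Sum.inl (xvar g (vi v0 - 2) (vj v0) hval) : Idx g) 1) :
    0 < (-1:ℚ) ^ Nm m' * coeff m' (Fop g P) := by
  set u0 : Idx g := Sum.inl (xvar g (vi v0 - 2) (vj v0) hval) with hu0
  set μ : Idx g →₀ ℕ := m - Finsupp.single (Sum.inl v0 : Idx g) 1 with hμ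
  have hy' : m' (Sum.inr ()) = 0 := by
    rw [hm', hμ]
    simp [Finsupp.add_apply, Finsupp.tsub_apply, Finsupp.single_apply, hmy, hu0]
  have hrec : μ + Finsupp.single (Sum.inl v0 : Idx g) 1 = m := sub_single_add _ _ hv0
  have hm'sub : m' - Finsupp.single u0 1 = μ := by
    rw [hm']; exact add_tsub_cancel_right _ _
  have hm'u0 : m' u0 ≠ 0 := by
    rw [hm']
    simp [Finsupp.add_apply, Finsupp.single_apply]
  have n1 : Nm μ + 1 = Nm m := by
    have h := Nm_sub m (Sum.inl v0) hv0; rw [Nm_single_inl] at h; rw [hμ]; exact h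
  have n3 : Nm m' = Nm μ + 1 := by
    rw [hm', Nm_add]
    rw [hu0, Nm_single_inl]
  have hNm : Nm m = Nm m' := by omega
  refine lt_of_lt_of_le ?_ (Fop_ge_deriv P hP m' hy' v0)
  rw [xv_valid _ _ hval, ← hu0, coeff_X_p, if_pos hm'u0, hm'sub, hrec]
  have hA : (0:ℚ) < ((μ (Sum.inl v0) + 1 : ℕ) : ℚ) := by positivity
  have hs : (-1:ℚ) ^ Nm m' * (((μ (Sum.inl v0) + 1 : ℕ) : ℚ) * coeff m P) =
      ((μ (Sum.inl v0) + 1 : ℕ) : ℚ) * ((-1:ℚ) ^ Nm m * coeff m P) := by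
    rw [hNm]; ring
  rw [hs]
  exact mul_pos hA hpos

lemma good_base (g i : ℕ) (h31 : VC g 3 1) : Good g (xv g 3 1 ^ (2*i)) := by
  intro m hy
  rw [xv_valid _ _ h31, X_pow_eq_monomial]
  constructor
  · by_cases hm : Finsupp.single (Sum.inl (xvar g 3 1 h31) : Idx g) (2*i) = m
    · rw [coeff_monomial, if_pos hm, ← hm, Nm_single_inl, pow_mul]
      norm_num
    · rw [coeff_monomial, if_neg hm, mul_zero]
  · rintro ⟨z0, hz0, hz0m⟩
    rw [coeff_monomial]
    by_cases hm : Finsupp.single (Sum.inl (xvar g 3 1 h31) : Idx g) (2*i) = m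
    · exfalso
      rw [← hm, Finsupp.single_apply] at hz0m
      by_cases he : (Sum.inl (xvar g 3 1 h31) : Idx g) = Sum.inl z0
      · have hvj := vj_xvar 3 1 h31
        rw [Sum.inl.inj he] at hvj
        omega
      · rw [if_neg he] at hz0m; exact hz0m rfl
    · rw [if_neg hm]

lemma good_iter (g i : ℕ) (h31 : VC g 3 1) (t : ℕ) :
    Good g ((Fop g ^ t) (xv g 3 1 ^ (2*i))) := by
  induction t with
  | zero => rw [pow_zero, Module.End.one_apply]; exact good_base g i h31
  | succ t ih => rw [pow_succ', Module.End.mul_apply]; exact good_F _ ih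

lemma phase1 (g i : ℕ) (hg : 2 ≤ g) (hi1 : 1 ≤ i) (hi2 : i ≤ g - 1) (h31 : VC g 3 1) :
    ∀ t, t ≤ 2*i - 1 → ∀ (h : VC g ((t:ℤ)+3) ((t:ℤ)+1)),
      0 < (-1:ℚ) ^ Nm (Finsupp.single (Sum.inl (xvar g 3 1 h31) : Idx g) (2*i-1-t)
            + Finsupp.single (Sum.inl (xvar g ((t:ℤ)+3) ((t:ℤ)+1) h) : Idx g) 1) *
          coeff (Finsupp.single (Sum.inl (xvar g 3 1 h31) : Idx g) (2*i-1-t)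
            + Finsupp.single (Sum.inl (xvar g ((t:ℤ)+3) ((t:ℤ)+1) h) : Idx g) 1)
            ((Fop g ^ t) (xv g 3 1 ^ (2*i))) := by
  intro t
  induction t with
  | zero =>
    intro _ h
    have hv : xvar g (((0:ℕ):ℤ)+3) (((0:ℕ):ℤ)+1) h = xvar g 3 1 h31 :=
      vars_ext _ _ (by rw [vi_xvar, vi_xvar]; norm_num) (by rw [vj_xvar, vj_xvar]; norm_num)
    rw [hv]
    have hcomb : Finsupp.single (Sum.inl (xvar g 3 1 h31) : Idx g) (2*i-1-0)
        + Finsupp.single (Sum.inl (xvar g 3 1 h31) : Idx g) 1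
        = Finsupp.single (Sum.inl (xvar g 3 1 h31) : Idx g) (2*i) := by
      rw [← Finsupp.single_add]
      congr 1
      omega
    rw [hcomb, pow_zero, Module.End.one_apply, xv_valid _ _ h31, X_pow_eq_monomial,
      coeff_monomial, if_pos rfl, Nm_single_inl, pow_mul]
    norm_num
  | succ t ih =>
    intro ht h
    have hprev : VC g ((t:ℤ)+3) ((t:ℤ)+1) := by
      unfold VC at h ⊢
      push_cast at h ⊢
      omega
    have hp := ih (by omega) hprev
    have hGood := good_iter g i h31 t
    have hmy : (Finsupp.single (Sum.inl (xvar g 3 1 h31) : Idx g) (2*i-1-t)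
        + Finsupp.single (Sum.inl (xvar g ((t:ℤ)+3) ((t:ℤ)+1) hprev) : Idx g) 1 : Idx g →₀ ℕ)
        (Sum.inr ()) = 0 := by
      simp [Finsupp.add_apply, Finsupp.single_apply]
    have hval' : VC g (vi (xvar g ((t:ℤ)+3) ((t:ℤ)+1) hprev) + vi (xvar g 3 1 h31) - 2)
        (vj (xvar g ((t:ℤ)+3) ((t:ℤ)+1) hprev) + vj (xvar g 3 1 h31)) := by
      rw [vi_xvar, vi_xvar, vj_xvar, vj_xvar]
      unfold VC
      push_cast
      omega
    have hw0 : (Finsupp.single (Sum.inl (xvar g 3 1 h31) : Idx g) (2*i-1-t)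
        + Finsupp.single (Sum.inl (xvar g ((t:ℤ)+3) ((t:ℤ)+1) hprev) : Idx g) 1 : Idx g →₀ ℕ)
        (Sum.inl (xvar g 3 1 h31)) ≠ 0 := by
      simp only [Finsupp.add_apply, Finsupp.single_apply]
      split_ifs <;> omega
    have hv0 : ((Finsupp.single (Sum.inl (xvar g 3 1 h31) : Idx g) (2*i-1-t)
        + Finsupp.single (Sum.inl (xvar g ((t:ℤ)+3) ((t:ℤ)+1) hprev) : Idx g) 1 : Idx g →₀ ℕ)
        - Finsupp.single (Sum.inl (xvar g 3 1 h31) : Idx g) 1 : Idx g →₀ ℕ)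
        (Sum.inl (xvar g ((t:ℤ)+3) ((t:ℤ)+1) hprev)) ≠ 0 := by
      simp only [Finsupp.tsub_apply, Finsupp.add_apply, Finsupp.single_apply]
      split_ifs <;> omega
    have hbin : 0 < binom (vi (xvar g ((t:ℤ)+3) ((t:ℤ)+1) hprev) + vi (xvar g 3 1 h31) - 2)
        (vi (xvar g ((t:ℤ)+3) ((t:ℤ)+1) hprev) - 1) := by
      rw [vi_xvar, vi_xvar]
      exact binom_pos _ _ (by omega) (by omega)
    have hvareq : xvar g (vi (xvar g ((t:ℤ)+3) ((t:ℤ)+1) hprev) + vi (xvar g 3 1 h31) - 2)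
        (vj (xvar g ((t:ℤ)+3) ((t:ℤ)+1) hprev) + vj (xvar g 3 1 h31)) hval'
        = xvar g (((t+1:ℕ):ℤ)+3) (((t+1:ℕ):ℤ)+1) h := by
      apply vars_ext
      · rw [vi_xvar, vi_xvar, vi_xvar, vi_xvar]; push_cast; ring
      · rw [vj_xvar, vj_xvar, vj_xvar, vj_xvar]; push_cast; ring
    have hm' : (Finsupp.single (Sum.inl (xvar g 3 1 h31) : Idx g) (2*i-1-(t+1))
          + Finsupp.single (Sum.inl (xvar g (((t+1:ℕ):ℤ)+3) (((t+1:ℕ):ℤ)+1) h) : Idx g) 1 : Idx g →₀ ℕ)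
        = (Finsupp.single (Sum.inl (xvar g 3 1 h31) : Idx g) (2*i-1-t)
            + Finsupp.single (Sum.inl (xvar g ((t:ℤ)+3) ((t:ℤ)+1) hprev) : Idx g) 1 : Idx g →₀ ℕ)
          - Finsupp.single (Sum.inl (xvar g 3 1 h31) : Idx g) 1
          - Finsupp.single (Sum.inl (xvar g ((t:ℤ)+3) ((t:ℤ)+1) hprev) : Idx g) 1
          + Finsupp.single (Sum.inl (xvar g
              (vi (xvar g ((t:ℤ)+3) ((t:ℤ)+1) hprev) + vi (xvar g 3 1 h31) - 2)
              (vj (xvar g ((t:ℤ)+3) ((t:ℤ)+1) hprev) + vj (xvar g 3 1 h31)) hval') : Idx g) 1 := by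
      rw [hvareq]
      ext x
      simp only [Finsupp.add_apply, Finsupp.tsub_apply, Finsupp.single_apply]
      split_ifs <;> omega
    rw [pow_succ', Module.End.mul_apply]
    exact step_merge _ hGood _ hmy _ _ hval' hw0 hv0 hbin hp _ hm'

lemma phase2 (g i : ℕ) (hg : 2 ≤ g) (hi1 : 1 ≤ i) (hi2 : i ≤ g - 1) (h31 : VC g 3 1) :
    ∀ s, s ≤ i + 1 → ∀ (h : VC g (2*(i:ℤ)+2-2*(s:ℤ)) (2*(i:ℤ))),
      0 < (-1:ℚ) ^ Nm (Finsupp.single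
            (Sum.inl (xvar g (2*(i:ℤ)+2-2*(s:ℤ)) (2*(i:ℤ)) h) : Idx g) 1 : Idx g →₀ ℕ) *
          coeff (Finsupp.single
            (Sum.inl (xvar g (2*(i:ℤ)+2-2*(s:ℤ)) (2*(i:ℤ)) h) : Idx g) 1 : Idx g →₀ ℕ)
            ((Fop g ^ (2*i-1+s)) (xv g 3 1 ^ (2*i))) := by
  intro s
  induction s with
  | zero =>
    intro _ h
    have hbig : VC g (((2*i-1:ℕ):ℤ)+3) (((2*i-1:ℕ):ℤ)+1) := by
      unfold VC
      push_cast
      omega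
    have hp := phase1 g i hg hi1 hi2 h31 (2*i-1) (le_refl _) hbig
    have hvareq : xvar g (((2*i-1:ℕ):ℤ)+3) (((2*i-1:ℕ):ℤ)+1) hbig
        = xvar g (2*(i:ℤ)+2-2*((0:ℕ):ℤ)) (2*(i:ℤ)) h := by
      apply vars_ext
      · rw [vi_xvar, vi_xvar]; push_cast; omega
      · rw [vj_xvar, vj_xvar]; push_cast; omega
    have hmeq : (Finsupp.single (Sum.inl (xvar g 3 1 h31) : Idx g) (2*i-1-(2*i-1))
        + Finsupp.single (Sum.inl (xvar g (((2*i-1:ℕ):ℤ)+3) (((2*i-1:ℕ):ℤ)+1) hbig) : Idx g) 1 : Idx g →₀ ℕ)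
        = (Finsupp.single
            (Sum.inl (xvar g (2*(i:ℤ)+2-2*((0:ℕ):ℤ)) (2*(i:ℤ)) h) : Idx g) 1 : Idx g →₀ ℕ) := by
      rw [hvareq, Nat.sub_self, Finsupp.single_zero, zero_add]
    rw [hmeq] at hp
    exact hp
  | succ s ih =>
    intro hs h
    have hprev : VC g (2*(i:ℤ)+2-2*((s:ℕ):ℤ)) (2*(i:ℤ)) := by
      unfold VC at h ⊢
      push_cast at h ⊢
      omega
    have hp := ih (by omega) hprev
    have hGood := good_iter g i h31 (2*i-1+s)
    have hmy : (Finsupp.single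
        (Sum.inl (xvar g (2*(i:ℤ)+2-2*((s:ℕ):ℤ)) (2*(i:ℤ)) hprev) : Idx g) 1 : Idx g →₀ ℕ)
        (Sum.inr ()) = 0 := by
      simp [Finsupp.single_apply]
    have hval' : VC g (vi (xvar g (2*(i:ℤ)+2-2*((s:ℕ):ℤ)) (2*(i:ℤ)) hprev) - 2)
        (vj (xvar g (2*(i:ℤ)+2-2*((s:ℕ):ℤ)) (2*(i:ℤ)) hprev)) := by
      rw [vi_xvar, vj_xvar]
      unfold VC
      push_cast at hs ⊢
      omega
    have hv0 : (Finsupp.single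
        (Sum.inl (xvar g (2*(i:ℤ)+2-2*((s:ℕ):ℤ)) (2*(i:ℤ)) hprev) : Idx g) 1 : Idx g →₀ ℕ)
        (Sum.inl (xvar g (2*(i:ℤ)+2-2*((s:ℕ):ℤ)) (2*(i:ℤ)) hprev)) ≠ 0 := by
      simp [Finsupp.single_apply]
    have hvareq : xvar g (vi (xvar g (2*(i:ℤ)+2-2*((s:ℕ):ℤ)) (2*(i:ℤ)) hprev) - 2)
        (vj (xvar g (2*(i:ℤ)+2-2*((s:ℕ):ℤ)) (2*(i:ℤ)) hprev)) hval'
        = xvar g (2*(i:ℤ)+2-2*((s+1:ℕ):ℤ)) (2*(i:ℤ)) h := by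
      apply vars_ext
      · rw [vi_xvar, vi_xvar, vi_xvar]; push_cast; ring
      · rw [vj_xvar, vj_xvar, vj_xvar]
    have hm' : (Finsupp.single
          (Sum.inl (xvar g (2*(i:ℤ)+2-2*((s+1:ℕ):ℤ)) (2*(i:ℤ)) h) : Idx g) 1 : Idx g →₀ ℕ)
        = (Finsupp.single
            (Sum.inl (xvar g (2*(i:ℤ)+2-2*((s:ℕ):ℤ)) (2*(i:ℤ)) hprev) : Idx g) 1 : Idx g →₀ ℕ)
          - Finsupp.single
            (Sum.inl (xvar g (2*(i:ℤ)+2-2*((s:ℕ):ℤ)) (2*(i:ℤ)) hprev) : Idx g) 1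
          + Finsupp.single (Sum.inl (xvar g
              (vi (xvar g (2*(i:ℤ)+2-2*((s:ℕ):ℤ)) (2*(i:ℤ)) hprev) - 2)
              (vj (xvar g (2*(i:ℤ)+2-2*((s:ℕ):ℤ)) (2*(i:ℤ)) hprev)) hval') : Idx g) 1 := by
      rw [hvareq, tsub_self, zero_add]
    rw [show 2*i-1+(s+1) = (2*i-1+s)+1 from by omega, pow_succ', Module.End.mul_apply]
    exact step_deriv _ hGood _ hmy _ hval' hv0 hp _ hm'

/-- In `F^{3i}(x_{3,1}^{2i}) ∈ A_{(0,2i)}`, written as a polynomial in the variables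
`x_{0,2j}` and `y`, the coefficient of `x_{0,2i}` is strictly negative. -/
theorem coeff_x02i_neg (g i : ℕ) (hg : 2 ≤ g) (hi1 : 1 ≤ i) (hi2 : i ≤ g - 1) :
    MvPolynomial.coeff
        (Finsupp.single
          (Sum.inl (⟨(⟨0, by omega⟩, ⟨2 * i, by omega⟩),
            show (0 : ℕ) ≤ 2 * i + 2 by omega,
            show 2 * i ≤ 2 * g - 2 by omega,
            show (0 + 2 * i) % 2 = 0 by omega,
            show ¬((0 : ℕ) = 0 ∧ 2 * i = 0) by omega⟩ : Vars g) : Idx g) 1)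
        ((Fop g ^ (3 * i)) (xv g 3 1 ^ (2 * i))) < 0 := by
  have hg' : (2:ℤ) ≤ (g:ℤ) := by exact_mod_cast hg
  have hi1' : (1:ℤ) ≤ (i:ℤ) := by exact_mod_cast hi1
  have hi2' : (i:ℤ) ≤ (g:ℤ) - 1 := by
    have : i ≤ g - 1 := hi2
    omega
  have h31 : VC g 3 1 := by unfold VC; omega
  have hfin : VC g (2*(i:ℤ)+2-2*((i+1:ℕ):ℤ)) (2*(i:ℤ)) := by unfold VC; push_cast; omega
  have hp := phase2 g i hg hi1 hi2 h31 (i+1) (le_refl _) hfin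
  rw [show 2*i-1+(i+1) = 3*i from by omega, Nm_single_inl, pow_one] at hp
  have key : ∀ z : Vars g, vi z = 0 → vj z = 2*(i:ℤ) →
      coeff (Finsupp.single (Sum.inl z : Idx g) 1)
        ((Fop g ^ (3*i)) (xv g 3 1 ^ (2*i))) < 0 := by
    intro z hzi hzj
    have hz : z = xvar g (2*(i:ℤ)+2-2*((i+1:ℕ):ℤ)) (2*(i:ℤ)) hfin :=
      vars_ext _ _ (by rw [vi_xvar]; push_cast; omega) (by rw [vj_xvar]; push_cast; omega)
    rw [hz]
    linarith
  apply key
  · unfold vi; norm_num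
  · unfold vj; push_cast; ring
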